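/- Consider A_1 = [[0,0,0],[1,0,0],[0,0,0]], B_1 = [1,0,0]ᵀ, A_2 = [[0,0,0],[0,0,0],[0,1,0]], B_2 = 0 (all 3×3 or 3×1 real matrices). Then for all h_1, h_2 > 0, the reachable set Ω_{h} = e^{A_2 h_2}⟨A_1|B_1⟩ equals {(x_1, x_2, h_2 x_2)ᵀ : x_1, x_2 ∈ ℝ}, a 2-dimensional subspace of ℝ³; and the union Ω = ⋃_{h_2 > 0} Ω_{h} is not a linear subspace of ℝ³. -/

import Mathlib

/-- The controllable subspace `⟨A|B⟩ = Σ_{i=0}^{n-1} A^i (range B)`. -/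
def ctrlSub {n m : ℕ} (A : Matrix (Fin n) (Fin n) ℝ) (B : Matrix (Fin n) (Fin m) ℝ) :
    Submodule ℝ (Fin n → ℝ) :=
  ⨆ i : Fin n, Submodule.map ((A ^ (i : ℕ)).mulVecLin) (LinearMap.range B.mulVecLin)

lemma exp_of_sq_zero (x : Matrix (Fin 3) (Fin 3) ℝ) (h : x ^ 2 = 0) :
    NormedSpace.exp x = 1 + x := by
  rw [NormedSpace.exp_eq_tsum ℝ]
  simp only []
  rw [tsum_eq_sum (s := {0, 1}) (by
    intro n hn
    simp only [Finset.mem_insert, Finset.mem_singleton] at hn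
    push_neg at hn
    have : x ^ n = 0 := by
      rw [show n = 2 + (n - 2) by omega, pow_add, h, zero_mul]
    simp [this])]
  norm_num

/-- Example 1 of the paper: for the given `(A₁,B₁)`, `(A₂,B₂ = 0)`, for all `h₂ > 0` the
reachable subspace `Ω_h = e^{A₂h₂}⟨A₁|B₁⟩` equals `{(x₁, x₂, h₂x₂)ᵀ}`, a 2-dimensional
subspace of `ℝ³`, while the union `Ω = ⋃_{h₂>0} Ω_h` is not a linear subspace. -/
theorem reachable_union_not_subspace :
    let A₁ : Matrix (Fin 3) (Fin 3) ℝ := !![0,0,0; 1,0,0; 0,0,0]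
    let B₁ : Matrix (Fin 3) (Fin 1) ℝ := !![1; 0; 0]
    let A₂ : Matrix (Fin 3) (Fin 3) ℝ := !![0,0,0; 0,0,0; 0,1,0]
    let Ωh : ℝ → Submodule ℝ (Fin 3 → ℝ) := fun h₂ =>
      Submodule.map (NormedSpace.exp (h₂ • A₂)).mulVecLin (ctrlSub A₁ B₁)
    (∀ h₂ : ℝ, 0 < h₂ →
      (Ωh h₂ : Set (Fin 3 → ℝ)) = {v | ∃ x₁ x₂ : ℝ, v = ![x₁, x₂, h₂ * x₂]} ∧
      Module.finrank ℝ (Ωh h₂) = 2) ∧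
    ¬ ∃ S : Submodule ℝ (Fin 3 → ℝ),
        (S : Set (Fin 3 → ℝ)) = ⋃ h₂ ∈ Set.Ioi (0 : ℝ), (Ωh h₂ : Set (Fin 3 → ℝ)) := by
  intro A₁ B₁ A₂ Ωh
  -- characterize the controllable subspace
  have hA1sq : A₁ ^ 2 = 0 := by
    ext i j
    fin_cases i <;> fin_cases j <;>
      simp [A₁, pow_two, Matrix.mul_apply, Fin.sum_univ_three]
  have hA2sq : A₂ ^ 2 = 0 := by
    ext i j
    fin_cases i <;> fin_cases j <;>
      simp [A₂, pow_two, Matrix.mul_apply, Fin.sum_univ_three]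
  have hctrl_le : ctrlSub A₁ B₁ ≤ LinearMap.ker (LinearMap.proj (R := ℝ) (φ := fun _ : Fin 3 => ℝ) 2) := by
    apply iSup_le
    intro i
    rintro _ ⟨_, ⟨u, rfl⟩, rfl⟩
    simp only [LinearMap.mem_ker, LinearMap.proj_apply, Matrix.mulVecLin_apply]
    fin_cases i
    · simp [A₁, B₁, Matrix.mulVec, dotProduct, Fin.sum_univ_three, Fin.sum_univ_one, Matrix.vecHead, Matrix.vecTail]
    · simp [A₁, B₁, pow_one, Matrix.mulVec, dotProduct, Fin.sum_univ_three,
        Fin.sum_univ_one]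
    · show ((A₁ ^ 2).mulVec _) 2 = 0
      simp [hA1sq]
  have he0 : ![(1:ℝ),0,0] ∈ ctrlSub A₁ B₁ := by
    apply Submodule.mem_iSup_of_mem (0 : Fin 3)
    refine ⟨![(1:ℝ),0,0], ⟨![1], ?_⟩, ?_⟩
    · ext i
      fin_cases i <;> simp [B₁, Matrix.mulVec, dotProduct, Fin.sum_univ_one, Matrix.vecHead, Matrix.vecTail]
    · show (A₁ ^ 0).mulVec _ = _
      simp
  have he1 : ![(0:ℝ),1,0] ∈ ctrlSub A₁ B₁ := by
    apply Submodule.mem_iSup_of_mem (1 : Fin 3)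
    refine ⟨![(1:ℝ),0,0], ⟨![1], ?_⟩, ?_⟩
    · ext i
      fin_cases i <;> simp [B₁, Matrix.mulVec, dotProduct, Fin.sum_univ_one, Matrix.vecHead, Matrix.vecTail]
    · show (A₁ ^ 1).mulVec _ = _
      ext i
      fin_cases i <;> simp [A₁, Matrix.mulVec, dotProduct, Fin.sum_univ_three]
  have hctrl : ∀ v : Fin 3 → ℝ, v ∈ ctrlSub A₁ B₁ ↔ v 2 = 0 := by
    intro v
    constructor
    · intro hv
      exact hctrl_le hv
    · intro hv
      have : v = v 0 • ![(1:ℝ),0,0] + v 1 • ![(0:ℝ),1,0] := by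
        ext i
        fin_cases i <;> simp [hv]
      rw [this]
      exact Submodule.add_mem _ (Submodule.smul_mem _ _ he0) (Submodule.smul_mem _ _ he1)
  -- the exponential
  have hexp : ∀ h₂ : ℝ, NormedSpace.exp (h₂ • A₂) = 1 + h₂ • A₂ := by
    intro h₂
    apply exp_of_sq_zero
    rw [smul_pow, hA2sq, smul_zero]
  have hmulvec : ∀ (h₂ : ℝ) (v : Fin 3 → ℝ),
      (NormedSpace.exp (h₂ • A₂)).mulVec v = ![v 0, v 1, v 2 + h₂ * v 1] := by
    intro h₂ v
    rw [hexp]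
    ext i
    fin_cases i <;>
      simp [A₂, Matrix.mulVec, dotProduct, Fin.sum_univ_three, Matrix.add_apply,
        Matrix.one_apply, Matrix.smul_apply] <;> ring
  -- the set characterization
  have hset : ∀ h₂ : ℝ, 0 < h₂ →
      (Ωh h₂ : Set (Fin 3 → ℝ)) = {v | ∃ x₁ x₂ : ℝ, v = ![x₁, x₂, h₂ * x₂]} := by
    intro h₂ _
    ext v
    constructor
    · rintro ⟨w, hw, rfl⟩
      have hw2 : w 2 = 0 := (hctrl w).1 hw
      refine ⟨w 0, w 1, ?_⟩
      show (NormedSpace.exp (h₂ • A₂)).mulVec w = _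
      rw [hmulvec, hw2]
      norm_num
    · rintro ⟨x₁, x₂, rfl⟩
      refine ⟨![x₁, x₂, 0], (hctrl _).2 rfl, ?_⟩
      show (NormedSpace.exp (h₂ • A₂)).mulVec _ = _
      rw [hmulvec]
      simp
  refine ⟨fun h₂ hh₂ => ⟨hset h₂ hh₂, ?_⟩, ?_⟩
  · -- finrank = 2
    have hspan : Ωh h₂ = Submodule.span ℝ (Set.range ![![(1:ℝ),0,0], ![(0:ℝ),1,h₂]]) := by
      apply SetLike.ext
      intro v
      rw [← SetLike.mem_coe, hset h₂ hh₂]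
      have hrange : Set.range ![![(1:ℝ),0,0], ![(0:ℝ),1,h₂]] =
          {![(1:ℝ),0,0], ![(0:ℝ),1,h₂]} := by
        ext w
        constructor
        · rintro ⟨i, rfl⟩
          fin_cases i <;> simp
        · rintro (rfl | rfl)
          · exact ⟨0, rfl⟩
          · exact ⟨1, rfl⟩
      rw [hrange, Submodule.mem_span_pair]
      constructor
      · rintro ⟨x₁, x₂, rfl⟩
        refine ⟨x₁, x₂, ?_⟩
        ext i
        fin_cases i <;> simp <;> ring
      · rintro ⟨a, b, rfl⟩
        refine ⟨a, b, ?_⟩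
        ext i
        fin_cases i <;> simp <;> ring
    rw [hspan]
    rw [finrank_span_eq_card (by
      rw [linearIndependent_fin2]
      constructor
      · intro h
        have := congrFun h 1
        norm_num at this
      · intro a h
        have := congrFun h 0
        norm_num at this)]
    simp
  · -- not a subspace
    rintro ⟨S, hS⟩
    have hmem : ∀ h₂ : ℝ, 0 < h₂ → ∀ x₁ x₂ : ℝ, ![x₁, x₂, h₂ * x₂] ∈ S := by
      intro h₂ hh₂ x₁ x₂
      rw [← SetLike.mem_coe, hS]
      exact Set.mem_biUnion hh₂ (by rw [hset h₂ hh₂]; exact ⟨x₁, x₂, rfl⟩)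
    have h1 : ![(0:ℝ), 1, 1] ∈ S := by
      have := hmem 1 one_pos 0 1
      norm_num at this
      exact this
    have h2 : ![(0:ℝ), 1, 2] ∈ S := by
      have := hmem 2 two_pos 0 1
      norm_num at this
      exact this
    have h3 : ![(0:ℝ), 0, 1] ∈ S := by
      have := S.sub_mem h2 h1
      have heq : ![(0:ℝ), 1, 2] - ![(0:ℝ), 1, 1] = ![(0:ℝ), 0, 1] := by
        ext i
        fin_cases i <;> norm_num
      rwa [heq] at this
    rw [← SetLike.mem_coe, hS] at h3
    obtain ⟨_, ⟨h₂, rfl⟩, hmem'⟩ := h3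
    simp only [Set.mem_iUnion, SetLike.mem_coe, exists_prop] at hmem'
    obtain ⟨hh₂, hv⟩ := hmem'
    rw [← SetLike.mem_coe, hset h₂ hh₂] at hv
    obtain ⟨x₁, x₂, hv⟩ := hv
    have e1 := congrFun hv 1
    have e2 := congrFun hv 2
    norm_num at e1 e2
    rw [← e1, mul_zero] at e2
    simp at e2
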